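/- For every ν ∈ (0,1) and every Θ ∈ (0,∞), the series Σ_{n=1}^∞ (-1)^{n-1} Θ^{-νn-1} (Γ(nν+1)/n!) sin(nπν) is absolutely convergent (the sequence of its terms is summable), so that ψ_ν(Θ) is well defined. -/

import Mathlib

/-- The `n`-th term (for original index `n+1 ≥ 1`) of the series defining the
Wright-type function `ψ_ν`: `(-1)^{n-1} Θ^{-νn-1} (Γ(nν+1)/n!) sin(nπν)`. -/
noncomputable def wrightTerm (ν Θ : ℝ) (n : ℕ) : ℝ :=
  (-1 : ℝ) ^ n * Θ ^ (-(ν * (n + 1 : ℝ)) - 1) *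
    (Real.Gamma ((n + 1 : ℝ) * ν + 1) / (Nat.factorial (n + 1) : ℝ)) *
    Real.sin ((n + 1 : ℝ) * Real.pi * ν)

/-- Gautschi-type bound from log-convexity: `Γ(x+ν) ≤ Γ(x) * x^ν` for `x > 0`, `0 ≤ ν ≤ 1`. -/
lemma gamma_add_le (x ν : ℝ) (hx : 0 < x) (hν0 : 0 ≤ ν) (hν1 : ν ≤ 1) :
    Real.Gamma (x + ν) ≤ Real.Gamma x * x ^ ν := by
  have hΓx := Real.Gamma_pos_of_pos hx
  have h := Real.convexOn_log_Gamma.2 (Set.mem_Ioi.mpr hx)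
      (Set.mem_Ioi.mpr (by linarith : (0:ℝ) < x + 1)) (by linarith : (0:ℝ) ≤ 1 - ν) hν0
      (by ring)
  have hc : (1 - ν) • x + ν • (x + 1) = x + ν := by simp [smul_eq_mul]; ring
  rw [hc] at h
  simp only [Function.comp_apply, smul_eq_mul] at h
  have hΓ1 : Real.Gamma (x + 1) = x * Real.Gamma x := Real.Gamma_add_one hx.ne'
  have hlog : Real.log (Real.Gamma (x + ν)) ≤ Real.log (Real.Gamma x) + ν * Real.log x := by
    rw [hΓ1, Real.log_mul hx.ne' hΓx.ne'] at h
    nlinarith [h]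
  have hΓxν := Real.Gamma_pos_of_pos (by linarith : (0:ℝ) < x + ν)
  calc Real.Gamma (x + ν) = Real.exp (Real.log (Real.Gamma (x + ν))) :=
        (Real.exp_log hΓxν).symm
    _ ≤ Real.exp (Real.log (Real.Gamma x) + ν * Real.log x) := Real.exp_le_exp.mpr hlog
    _ = Real.Gamma x * x ^ ν := by
        rw [Real.exp_add, Real.exp_log hΓx, Real.rpow_def_of_pos hx]
        ring_nf

/-- For every `ν ∈ (0,1)` and every `Θ ∈ (0,∞)`, the series defining `ψ_ν(Θ)`
is absolutely convergent (its terms form a summable family), so `ψ_ν` is well defined. -/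
theorem wrightTerm_summable (ν : ℝ) (hν : ν ∈ Set.Ioo (0 : ℝ) 1)
    (Θ : ℝ) (hΘ : Θ ∈ Set.Ioi (0 : ℝ)) :
    Summable (wrightTerm ν Θ) := by
  obtain ⟨hν0, hν1⟩ := hν
  have hΘ0 : 0 < Θ := hΘ
  set g : ℕ → ℝ := fun n => Θ ^ (-(ν * (n + 1 : ℝ)) - 1) *
      (Real.Gamma ((n + 1 : ℝ) * ν + 1) / (Nat.factorial (n + 1) : ℝ)) with hg
  have hgpos : ∀ n, 0 < g n := by
    intro n
    apply mul_pos (Real.rpow_pos_of_pos hΘ0 _)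
    apply div_pos (Real.Gamma_pos_of_pos (by positivity)) (by positivity)
  have hsumg : Summable g := by
    apply summable_of_ratio_norm_eventually_le (r := 1/2) (by norm_num)
    have htend : Filter.Tendsto (fun n : ℕ => ((n : ℝ) + 2) ^ (1 - ν)) Filter.atTop
        Filter.atTop := by
      apply (tendsto_rpow_atTop (by linarith)).comp
      exact Filter.tendsto_atTop_add_const_right _ 2 tendsto_natCast_atTop_atTop
    filter_upwards [htend.eventually_ge_atTop (2 * Θ ^ (-ν))] with n hn
    have hnpos : (0:ℝ) < (n:ℝ) + 2 := by positivity
    -- ratio bound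
    have hx : (0:ℝ) < (n + 1 : ℝ) * ν + 1 := by positivity
    have key : Real.Gamma (((n:ℝ) + 2) * ν + 1) ≤
        Real.Gamma ((n + 1 : ℝ) * ν + 1) * ((n:ℝ) + 2) ^ ν := by
      have h1 := gamma_add_le ((n + 1 : ℝ) * ν + 1) ν hx hν0.le hν1.le
      have h2 : ((n:ℝ) + 2) * ν + 1 = ((n + 1 : ℝ) * ν + 1) + ν := by ring
      rw [h2]
      refine h1.trans ?_
      apply mul_le_mul_of_nonneg_left _ (Real.Gamma_pos_of_pos hx).le
      exact Real.rpow_le_rpow hx.le (by nlinarith) hν0.le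
    have hratio : g (n + 1) ≤ (Θ ^ (-ν) * ((n:ℝ) + 2) ^ (ν - 1)) * g n := by
      have hfac : ((Nat.factorial (n + 2)) : ℝ) = ((n:ℝ) + 2) * (Nat.factorial (n + 1)) := by
        rw [Nat.factorial_succ]; push_cast; ring
      have hexp : Θ ^ (-(ν * ((n:ℝ) + 1 + 1)) - 1) =
          Θ ^ (-ν) * Θ ^ (-(ν * ((n:ℝ) + 1)) - 1) := by
        rw [← Real.rpow_add hΘ0]; ring_nf
      have hpow : ((n:ℝ) + 2) ^ ν = ((n:ℝ) + 2) ^ (ν - 1) * ((n:ℝ) + 2) := by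
        rw [← Real.rpow_add_one hnpos.ne']; ring_nf
      simp only [hg]
      push_cast
      rw [hexp, hfac]
      have hΘν := Real.rpow_pos_of_pos hΘ0 (-ν)
      have hnν := Real.rpow_pos_of_pos hnpos (ν - 1)
      have hfacpos : (0:ℝ) < (Nat.factorial (n + 1) : ℝ) := by positivity
      have heq : Θ ^ (-ν) * ((n:ℝ) + 2) ^ (ν - 1) *
          (Θ ^ (-(ν * ((n:ℝ) + 1)) - 1) *
            (Real.Gamma (((n:ℝ) + 1) * ν + 1) / (Nat.factorial (n + 1) : ℝ))) =
          Θ ^ (-ν) * Θ ^ (-(ν * ((n:ℝ) + 1)) - 1) *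
            ((Real.Gamma (((n:ℝ) + 1) * ν + 1) * (((n:ℝ) + 2) ^ (ν - 1) * ((n:ℝ) + 2))) /
              (((n:ℝ) + 2) * (Nat.factorial (n + 1) : ℝ))) := by
        field_simp
      rw [heq]
      gcongr
      rw [← hpow]
      convert key using 3
      · rfl
      · ring
    have hcoef : Θ ^ (-ν) * ((n:ℝ) + 2) ^ (ν - 1) ≤ 1/2 := by
      have hΘν := Real.rpow_pos_of_pos hΘ0 (-ν)
      have h1 : ((n:ℝ) + 2) ^ (ν - 1) = (((n:ℝ) + 2) ^ (1 - ν))⁻¹ := by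
        rw [← Real.rpow_neg hnpos.le]; ring_nf
      rw [h1]
      have h2 : (0:ℝ) < ((n:ℝ) + 2) ^ (1 - ν) := Real.rpow_pos_of_pos hnpos _
      rw [mul_inv_le_iff₀ h2]
      calc Θ ^ (-ν) ≤ (1/2) * (2 * Θ ^ (-ν)) := by ring_nf; rfl
        _ ≤ 1/2 * ((n:ℝ) + 2) ^ (1 - ν) := by nlinarith
    have : g (n + 1) ≤ (1/2) * g n := by
      refine hratio.trans ?_
      exact mul_le_mul_of_nonneg_right hcoef (hgpos n).le
    rw [Real.norm_eq_abs, Real.norm_eq_abs, abs_of_pos (hgpos _), abs_of_pos (hgpos _)]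
    exact this
  apply hsumg.of_norm_bounded
  intro n
  rw [Real.norm_eq_abs]
  unfold wrightTerm
  rw [abs_mul, abs_mul, abs_mul]
  have h1 : |(-1 : ℝ) ^ n| = 1 := by rw [abs_pow, abs_neg, abs_one, one_pow]
  have h2 : |Θ ^ (-(ν * (n + 1 : ℝ)) - 1)| = Θ ^ (-(ν * (n + 1 : ℝ)) - 1) :=
    abs_of_pos (Real.rpow_pos_of_pos hΘ0 _)
  have h3 : |Real.Gamma ((n + 1 : ℝ) * ν + 1) / (Nat.factorial (n + 1) : ℝ)| =
      Real.Gamma ((n + 1 : ℝ) * ν + 1) / (Nat.factorial (n + 1) : ℝ) :=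
    abs_of_pos (div_pos (Real.Gamma_pos_of_pos (by positivity)) (by positivity))
  rw [h1, h2, h3, one_mul]
  have h4 : |Real.sin ((n + 1 : ℝ) * Real.pi * ν)| ≤ 1 := Real.abs_sin_le_one _
  calc Θ ^ (-(ν * (n + 1 : ℝ)) - 1) *
        (Real.Gamma ((n + 1 : ℝ) * ν + 1) / (Nat.factorial (n + 1) : ℝ)) *
        |Real.sin ((n + 1 : ℝ) * Real.pi * ν)|
      ≤ Θ ^ (-(ν * (n + 1 : ℝ)) - 1) *
        (Real.Gamma ((n + 1 : ℝ) * ν + 1) / (Nat.factorial (n + 1) : ℝ)) * 1 := by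
        apply mul_le_mul_of_nonneg_left h4
        exact (hgpos n).le
    _ = g n := by rw [mul_one]
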